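/- With G = (V, E_A ∪ E_B), G_A = (V, E_A), G_B = (V, E_B), and HSTAB(G) = STAB(G_A) ⊙ QSTAB(G_B), one has the sandwich inclusions STAB(G) ⊆ HSTAB(G) ⊆ QSTAB(G). -/

import Mathlib

open Finset

variable {V : Type} [Fintype V] [DecidableEq V]

/-- The characteristic (0/1) vector of a set of vertices. -/
noncomputable def charVec (S : Set V) : V → ℝ := S.indicator 1

/-- A stable (independent) set: no two of its elements are adjacent. -/
def IsStable (G : SimpleGraph V) (S : Set V) : Prop :=
  ∀ ⦃u⦄, u ∈ S → ∀ ⦃v⦄, v ∈ S → ¬ G.Adj u v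

/-- The stable set polytope: convex hull of characteristic vectors of stable sets. -/
noncomputable def STAB (G : SimpleGraph V) : Set (V → ℝ) :=
  convexHull ℝ {x | ∃ S : Set V, IsStable G S ∧ x = charVec S}

/-- The clique-constrained (fractional stable set) polytope. -/
def QSTAB (G : SimpleGraph V) : Set (V → ℝ) :=
  {x | (∀ v, 0 ≤ x v) ∧ ∀ Q : Finset V, G.IsClique (↑Q : Set V) → ∑ v ∈ Q, x v ≤ 1}

/-- The hybrid set `HSTAB(G) = STAB(G_A) ⊙ QSTAB(G_B)`: convex hull of Hadamard
products of vertices (extreme points) of the two polytopes; the vertices of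
`STAB(G_A)` are exactly the characteristic vectors of stable sets of `G_A`. -/
noncomputable def HSTAB (GA GB : SimpleGraph V) : Set (V → ℝ) :=
  convexHull ℝ {z | ∃ S : Set V, IsStable GA S ∧
    ∃ ω ∈ (QSTAB GB).extremePoints ℝ, z = charVec S * ω}

/-- Maximum (supremum) of the linear functional `x ↦ w · x` over a set. -/
noncomputable def maxW (P : Set (V → ℝ)) (w : V → ℝ) : ℝ :=
  sSup ((fun x => ∑ v, w v * x v) '' P)

lemma charVec_mem_QSTAB (G : SimpleGraph V) {S : Set V} (hS : IsStable G S) :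
    charVec S ∈ QSTAB G := by
  classical
  constructor
  · intro v
    by_cases h : v ∈ S <;> simp [charVec, Set.indicator, h]
  · intro Q hQ
    have hsum : ∑ v ∈ Q, charVec S v = ((Q.filter (fun v => v ∈ S)).card : ℝ) := by
      rw [Finset.card_filter]
      push_cast
      apply Finset.sum_congr rfl
      intro v _
      by_cases h : v ∈ S <;> simp [charVec, Set.indicator, h]
    rw [hsum]
    have hcard : (Q.filter (fun v => v ∈ S)).card ≤ 1 := by
      rw [Finset.card_le_one]
      intro a ha b hb
      simp only [Finset.mem_filter] at ha hb
      by_contra hne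
      exact hS ha.2 hb.2 (hQ ha.1 hb.1 hne)
    exact_mod_cast hcard

lemma QSTAB_le_one (G : SimpleGraph V) {x : V → ℝ} (hx : x ∈ QSTAB G) (v : V) :
    x v ≤ 1 := by
  have h := hx.2 {v} (by simp [SimpleGraph.isClique_iff, Set.Pairwise])
  simpa using h

lemma charVec_extreme (G : SimpleGraph V) {S : Set V} (hS : IsStable G S) :
    charVec S ∈ (QSTAB G).extremePoints ℝ := by
  refine ⟨charVec_mem_QSTAB G hS, ?_⟩
  intro x₁ hx₁ x₂ hx₂ hseg
  obtain ⟨a, b, ha, hb, hab, heq⟩ := hseg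
  have key : x₁ = charVec S ∧ x₂ = charVec S := by
    constructor <;> funext v <;>
    · have hv : a * x₁ v + b * x₂ v = charVec S v := by
        have := congrFun heq v
        simpa using this
      have h1 : 0 ≤ x₁ v := hx₁.1 v
      have h2 : 0 ≤ x₂ v := hx₂.1 v
      have h1' : x₁ v ≤ 1 := QSTAB_le_one G hx₁ v
      have h2' : x₂ v ≤ 1 := QSTAB_le_one G hx₂ v
      by_cases h : v ∈ S <;> simp only [charVec, Set.indicator, h, if_pos, if_neg,
        Pi.one_apply, ite_true, ite_false] at hv ⊢ <;> nlinarith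
  exact key.1

lemma QSTAB_convex (G : SimpleGraph V) : Convex ℝ (QSTAB G) := by
  intro x hx y hy a b ha hb hab
  constructor
  · intro v
    simp only [Pi.add_apply, Pi.smul_apply, smul_eq_mul]
    exact add_nonneg (mul_nonneg ha (hx.1 v)) (mul_nonneg hb (hy.1 v))
  · intro Q hQ
    simp only [Pi.add_apply, Pi.smul_apply, smul_eq_mul]
    rw [Finset.sum_add_distrib, ← Finset.mul_sum, ← Finset.mul_sum]
    have := hx.2 Q hQ
    have := hy.2 Q hQ
    nlinarith

/-- The sandwich inclusions
`STAB(G) ⊆ HSTAB(G) ⊆ QSTAB(G)` for `G = (V, E_A ∪ E_B)` and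
`HSTAB(G) = STAB(G_A) ⊙ QSTAB(G_B)`. -/
theorem HSTAB_sandwich (GA GB : SimpleGraph V) :
    STAB (GA ⊔ GB) ⊆ HSTAB GA GB ∧ HSTAB GA GB ⊆ QSTAB (GA ⊔ GB) := by
  classical
  constructor
  · -- STAB ⊆ HSTAB : generators included
    apply convexHull_mono
    rintro x ⟨S, hS, rfl⟩
    have hSB : IsStable GB S := fun u hu v hv h => hS hu hv (Or.inr h)
    have hSA : IsStable GA S := fun u hu v hv h => hS hu hv (Or.inl h)
    refine ⟨S, hSA, charVec S, charVec_extreme GB hSB, ?_⟩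
    funext v
    by_cases h : v ∈ S <;> simp [charVec, Set.indicator, h]
  · -- HSTAB ⊆ QSTAB
    apply convexHull_min _ (QSTAB_convex _)
    rintro z ⟨S, hS, ω, hω, rfl⟩
    have hωQ : ω ∈ QSTAB GB := hω.1
    constructor
    · intro v
      have h0 : 0 ≤ ω v := hωQ.1 v
      by_cases h : v ∈ S <;> simp [charVec, Set.indicator, h, h0]
    · intro Q hQ
      have hsum : ∑ v ∈ Q, (charVec S * ω) v
          = ∑ v ∈ Q.filter (fun v => v ∈ S), ω v := by
        rw [Finset.sum_filter]
        apply Finset.sum_congr rfl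
        intro v _
        by_cases h : v ∈ S <;> simp [charVec, Set.indicator, h]
      rw [hsum]
      have hclique : GB.IsClique (↑(Q.filter (fun v => v ∈ S)) : Set V) := by
        intro u hu v hv huv
        simp only [Finset.coe_filter, Set.mem_setOf_eq] at hu hv
        have := hQ hu.1 hv.1 huv
        rcases this with h | h
        · exact absurd h (hS hu.2 hv.2)
        · exact h
      exact hωQ.2 _ hclique
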